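/- Let (N, D, θ) be a sandpile model in dimension d and let c be a finite configuration. For every sequential derivation c = c_0 ⇀_{z_1} c_1 ⇀ … ⇀_{z_k} c_k = c' and every pair of cells x, y with y ∈ x + N, the toppling counts at x and y differ by at most the total number of grains: |#{i : z_i = x} − #{i : z_i = y}| ≤ Σ_{z∈ℤ^d} c(z). -/

import Mathlib

/-- A sandpile model in dimension `d`: a finite nonempty neighborhood
`N ⊆ ℤ^d \ {0}` and a distribution `D` with `D v ≥ 1` for `v ∈ N`. -/
structure Sandpile (d : ℕ) where
  N : Finset (Fin d → ℤ)
  D : (Fin d → ℤ) → ℕ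
  N_nonempty : N.Nonempty
  zero_not_mem : (0 : Fin d → ℤ) ∉ N
  D_pos : ∀ v ∈ N, 1 ≤ D v

/-- The stability threshold `θ = Σ_{v ∈ N} D(v)`. -/
def Sandpile.θ {d : ℕ} (M : Sandpile d) : ℕ := ∑ v ∈ M.N, M.D v

/-- The Heaviside function: `H n = 1` if `n ≥ 0`, else `0`. -/
def Heaviside (n : ℤ) : ℕ := if 0 ≤ n then 1 else 0

/-- The parallel global rule `F`. -/
def Sandpile.F {d : ℕ} (M : Sandpile d) (c : (Fin d → ℤ) → ℕ) : (Fin d → ℤ) → ℕ :=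
  fun x => c x - M.θ * Heaviside ((c x : ℤ) - (M.θ : ℤ))
    + ∑ y ∈ M.N, M.D y * Heaviside ((c (x + y) : ℤ) - (M.θ : ℤ))

/-- A configuration is stable when every cell holds fewer than `θ` grains. -/
def Sandpile.Stable {d : ℕ} (M : Sandpile d) (c : (Fin d → ℤ) → ℕ) : Prop :=
  ∀ x, c x < M.θ

/-- A configuration is finite when its total number of grains is finite,
equivalently its support is finite. -/
def FiniteConfig {d : ℕ} (c : (Fin d → ℤ) → ℕ) : Prop :=
  (Function.support c).Finite

/-- Sequential toppling at an unstable cell `x`: remove `θ` grains from `x`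
and add `D(y−x)` grains to each `y ∈ x + N`, other cells unchanged. -/
def Sandpile.SeqStepAt {d : ℕ} (M : Sandpile d) (x : Fin d → ℤ)
    (c c' : (Fin d → ℤ) → ℕ) : Prop :=
  M.θ ≤ c x ∧
    ∀ y, c' y = (if y = x then c y - M.θ else c y)
      + (if y - x ∈ M.N then M.D (y - x) else 0)

/-- `c ⇀ c'`: a sequential toppling at some unstable cell. -/
def Sandpile.SeqStep {d : ℕ} (M : Sandpile d)
    (c c' : (Fin d → ℤ) → ℕ) : Prop :=
  ∃ x, M.SeqStepAt x c c'

/-- `c ⇀* c'`: reflexive–transitive closure of `⇀`. -/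
def Sandpile.SeqReach {d : ℕ} (M : Sandpile d)
    (c c' : (Fin d → ℤ) → ℕ) : Prop :=
  Relation.ReflTransGen M.SeqStep c c'

section AuxProof

open Finset

set_option linter.unusedSectionVars false

namespace SandAux

section Abstract

variable {G : Type*} [AddCommGroup G] [DecidableEq G]


set_option linter.unusedSectionVars false

variable {G : Type*} [AddCommGroup G] [DecidableEq G]

lemma sum_indicator_Icc (R m : ℕ) (hm : m ≤ R) :
    ∑ r ∈ Finset.Icc 1 R, (if r ≤ m then (1 : ℤ) else 0) = (m : ℤ) := by
  rw [Finset.sum_boole]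
  have h : (Finset.Icc 1 R).filter (fun r => r ≤ m) = Finset.Icc 1 m := by
    ext r; simp only [Finset.mem_filter, Finset.mem_Icc]; omega
  rw [h, Nat.card_Icc]
  simp

lemma layer_sum (t : G → ℕ) (A : Finset G) (R : ℕ) (hR : ∀ z, t z ≤ R) (f : G → G) :
    ∑ z ∈ A, (t (f z) : ℤ)
      = ∑ r ∈ Finset.Icc 1 R, ((A.filter fun z => r ≤ t (f z)).card : ℤ) := by
  calc ∑ z ∈ A, (t (f z) : ℤ)
      = ∑ z ∈ A, ∑ r ∈ Finset.Icc 1 R, (if r ≤ t (f z) then (1:ℤ) else 0) := by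
        exact Finset.sum_congr rfl fun z _ => (sum_indicator_Icc R _ (hR _)).symm
    _ = ∑ r ∈ Finset.Icc 1 R, ∑ z ∈ A, (if r ≤ t (f z) then (1:ℤ) else 0) := Finset.sum_comm
    _ = _ := Finset.sum_congr rfl fun r _ => Finset.sum_boole _ _

lemma skeleton (t : G → ℕ) (R : ℕ) (hR : ∀ z, t z ≤ R) (A : Finset G)
    (N : Finset G) (D : G → ℕ) (v0 : G) (hv0 : v0 ∈ N) (hD1 : 1 ≤ D v0)
    (m : ℕ) (I : Finset ℕ) (hI : I ⊆ Finset.Icc 1 R) (hIm : I.card = m)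
    (h0 : ∀ v ∈ N, ∀ r ∈ Finset.Icc 1 R,
      (A.filter fun z => r ≤ t (z - v)).card ≤ (A.filter fun z => r ≤ t z).card)
    (h1 : ∀ r ∈ I,
      (A.filter fun z => r ≤ t (z - v0)).card + 1 ≤ (A.filter fun z => r ≤ t z).card) :
    (m : ℤ) ≤ ∑ z ∈ A, ((∑ v ∈ N, (D v : ℤ)) * (t z : ℤ)
        - ∑ v ∈ N, (D v : ℤ) * (t (z - v) : ℤ)) := by
  have hdiff : ∀ v ∈ N, ∑ z ∈ A, (t (z - v) : ℤ) ≤ ∑ z ∈ A, (t z : ℤ) := by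
    intro v hv
    rw [layer_sum t A R hR (fun z => z - v), layer_sum t A R hR (fun z => z)]
    apply Finset.sum_le_sum
    intro r hr
    exact_mod_cast h0 v hv r hr
  have hdiff0 : (m : ℤ) + ∑ z ∈ A, (t (z - v0) : ℤ) ≤ ∑ z ∈ A, (t z : ℤ) := by
    rw [layer_sum t A R hR (fun z => z - v0), layer_sum t A R hR (fun z => z)]
    have : (m : ℤ) = ∑ r ∈ Finset.Icc 1 R, (if r ∈ I then (1:ℤ) else 0) := by
      rw [Finset.sum_boole]
      rw [Finset.filter_mem_eq_inter, Finset.inter_eq_right.mpr hI, hIm]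
    rw [this, ← Finset.sum_add_distrib]
    apply Finset.sum_le_sum
    intro r hr
    by_cases hrI : r ∈ I
    · simp only [hrI, if_true]
      have := h1 r hrI
      push_cast
      omega
    · simp only [hrI, if_false]
      have := h0 v0 hv0 r hr
      push_cast
      omega
  -- rearrange sum
  have hre : ∑ z ∈ A, ((∑ v ∈ N, (D v : ℤ)) * (t z : ℤ)
        - ∑ v ∈ N, (D v : ℤ) * (t (z - v) : ℤ))
      = ∑ v ∈ N, (D v : ℤ) * (∑ z ∈ A, (t z : ℤ) - ∑ z ∈ A, (t (z - v) : ℤ)) := by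
    rw [Finset.sum_sub_distrib]
    rw [Finset.sum_comm (s := A) (t := N)]
    have e1 : ∑ z ∈ A, (∑ v ∈ N, (D v : ℤ)) * (t z : ℤ)
        = ∑ v ∈ N, ∑ z ∈ A, (D v : ℤ) * (t z : ℤ) := by
      rw [Finset.sum_comm]
      exact Finset.sum_congr rfl fun z _ => Finset.sum_mul _ _ _
    rw [e1, ← Finset.sum_sub_distrib]
    apply Finset.sum_congr rfl
    intro v _
    rw [mul_sub, Finset.mul_sum, Finset.mul_sum]
  rw [hre]
  have key : ∀ v ∈ N, (if v = v0 then (m:ℤ) else 0)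
      ≤ (D v : ℤ) * (∑ z ∈ A, (t z : ℤ) - ∑ z ∈ A, (t (z - v) : ℤ)) := by
    intro v hv
    by_cases hvv : v = v0
    · subst hvv
      simp only [if_true]
      have h2 : (m : ℤ) ≤ ∑ z ∈ A, (t z : ℤ) - ∑ z ∈ A, (t (z - v) : ℤ) := by linarith
      have h3 : (1 : ℤ) ≤ (D v : ℤ) := by exact_mod_cast hD1
      nlinarith [h2, h3, hdiff v hv]
    · simp only [hvv, if_false]
      have h2 : (0:ℤ) ≤ ∑ z ∈ A, (t z : ℤ) - ∑ z ∈ A, (t (z - v) : ℤ) := by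
        have := hdiff v hv; linarith
      positivity
  calc (m : ℤ) = ∑ v ∈ N, (if v = v0 then (m:ℤ) else 0) := by
        rw [Finset.sum_ite_eq' N v0 (fun _ => (m:ℤ))]
        simp [hv0]
    _ ≤ _ := Finset.sum_le_sum key



namespace Core

lemma core (t : G → ℕ) (Z : Finset G) (hZ : ∀ z, t z ≠ 0 → z ∈ Z)
    (R : ℕ) (hR : ∀ z, t z ≤ R)
    (N : Finset G) (D : G → ℕ) (v0 : G) (hv0 : v0 ∈ N) (hD1 : 1 ≤ D v0) (x : G) :
    ∃ A : Finset G,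
      |(t x : ℤ) - (t (x + v0) : ℤ)| ≤
        ∑ z ∈ A, ((∑ v ∈ N, (D v : ℤ)) * (t z : ℤ)
          - ∑ v ∈ N, (D v : ℤ) * (t (z - v) : ℤ)) := by
  set y := x + v0 with hy
  have hyx : y - v0 = x := by rw [hy]; abel
  rcases lt_trichotomy (t x) (t y) with hlt | heq | hgt
  · -- direction B : t y > t x, s := t y, I = Icc (t x + 1) (t y)
    set s := t y with hs
    set A := Z.filter (fun z => s ≤ t z) with hA
    have hyA : y ∈ A := by
      rw [hA, Finset.mem_filter]
      exact ⟨hZ y (by omega), le_rfl⟩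
    have h0 : ∀ v ∈ N, ∀ r ∈ Finset.Icc 1 R,
        (A.filter fun z => r ≤ t (z - v)).card ≤ (A.filter fun z => r ≤ t z).card := by
      intro v _ r hr
      rw [Finset.mem_Icc] at hr
      by_cases hsr : s ≤ r
      · have hft : A.filter (fun z => r ≤ t z) = Z.filter (fun z => r ≤ t z) := by
          rw [hA, Finset.filter_filter]
          apply Finset.filter_congr
          intro z _
          constructor
          · exact fun h => h.2
          · exact fun h => ⟨le_trans hsr h, h⟩
        rw [hft]
        apply Finset.card_le_card_of_injOn (fun z => z - v)
        · intro z hz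
          simp only [Finset.mem_coe] at hz ⊢
          rw [Finset.mem_filter] at hz ⊢
          refine ⟨hZ _ (by omega), hz.2⟩
        · intro z1 _ z2 _ h
          exact sub_left_injective h
      · have hft : A.filter (fun z => r ≤ t z) = A := by
          apply Finset.filter_true_of_mem
          intro z hz
          rw [hA, Finset.mem_filter] at hz
          omega
        rw [hft]
        exact Finset.card_le_card (Finset.filter_subset _ _)
    have h1 : ∀ r ∈ Finset.Icc (t x + 1) (t y),
        (A.filter fun z => r ≤ t (z - v0)).card + 1 ≤ (A.filter fun z => r ≤ t z).card := by
      intro r hr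
      rw [Finset.mem_Icc] at hr
      have hft : A.filter (fun z => r ≤ t z) = A := by
        apply Finset.filter_true_of_mem
        intro z hz
        rw [hA, Finset.mem_filter] at hz
        omega
      rw [hft]
      have hsub : A.filter (fun z => r ≤ t (z - v0)) ⊆ A.erase y := by
        intro z hz
        rw [Finset.mem_filter] at hz
        rw [Finset.mem_erase]
        refine ⟨?_, hz.1⟩
        rintro rfl
        rw [hyx] at hz
        omega
      have := Finset.card_le_card hsub
      rw [Finset.card_erase_of_mem hyA] at this
      have hpos : 0 < A.card := Finset.card_pos.mpr ⟨y, hyA⟩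
      omega
    have hle := skeleton t R hR A N D v0 hv0 hD1 (t y - t x)
      (Finset.Icc (t x + 1) (t y))
      (by intro r hr; rw [Finset.mem_Icc] at hr ⊢; have := hR y; omega)
      (by rw [Nat.card_Icc]; omega) h0 h1
    refine ⟨A, le_trans (le_of_eq ?_) hle⟩
    rw [abs_of_nonpos (by push_cast; omega)]
    push_cast
    omega
  · exact ⟨∅, by rw [heq]; simp⟩
  · -- direction A : t x > t y, s := t y + 1, I = Icc (t y + 1) (t x)
    set s := t y + 1 with hs
    set A := Z.filter (fun z => s ≤ t z) with hA
    have h0 : ∀ v ∈ N, ∀ r ∈ Finset.Icc 1 R,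
        (A.filter fun z => r ≤ t (z - v)).card ≤ (A.filter fun z => r ≤ t z).card := by
      intro v _ r hr
      rw [Finset.mem_Icc] at hr
      by_cases hsr : s ≤ r
      · have hft : A.filter (fun z => r ≤ t z) = Z.filter (fun z => r ≤ t z) := by
          rw [hA, Finset.filter_filter]
          apply Finset.filter_congr
          intro z _
          constructor
          · exact fun h => h.2
          · exact fun h => ⟨le_trans hsr h, h⟩
        rw [hft]
        apply Finset.card_le_card_of_injOn (fun z => z - v)
        · intro z hz
          simp only [Finset.mem_coe] at hz ⊢
          rw [Finset.mem_filter] at hz ⊢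
          refine ⟨hZ _ (by omega), hz.2⟩
        · intro z1 _ z2 _ h
          exact sub_left_injective h
      · have hft : A.filter (fun z => r ≤ t z) = A := by
          apply Finset.filter_true_of_mem
          intro z hz
          rw [hA, Finset.mem_filter] at hz
          omega
        rw [hft]
        exact Finset.card_le_card (Finset.filter_subset _ _)
    have h1 : ∀ r ∈ Finset.Icc (t y + 1) (t x),
        (A.filter fun z => r ≤ t (z - v0)).card + 1 ≤ (A.filter fun z => r ≤ t z).card := by
      intro r hr
      rw [Finset.mem_Icc] at hr
      have hsr : s ≤ r := hr.1
      have hft : A.filter (fun z => r ≤ t z) = Z.filter (fun z => r ≤ t z) := by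
        rw [hA, Finset.filter_filter]
        apply Finset.filter_congr
        intro z _
        constructor
        · exact fun h => h.2
        · exact fun h => ⟨le_trans hsr h, h⟩
      rw [hft]
      have hxZ : x ∈ Z.filter (fun z => r ≤ t z) := by
        rw [Finset.mem_filter]
        exact ⟨hZ x (by omega), hr.2⟩
      have hcard : (A.filter (fun z => r ≤ t (z - v0))).card
          ≤ ((Z.filter (fun z => r ≤ t z)).erase x).card := by
        apply Finset.card_le_card_of_injOn (fun z => z - v0)
        · intro z hz
          simp only [Finset.mem_coe] at hz ⊢
          rw [Finset.mem_filter] at hz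
          have hzA := hz.1
          rw [hA, Finset.mem_filter] at hzA
          rw [Finset.mem_erase, Finset.mem_filter]
          refine ⟨?_, hZ _ (by omega), hz.2⟩
          intro hzx
          have hzy : z = y := by rw [hy, ← hzx]; abel
          rw [hzy] at hzA
          omega
        · intro z1 _ z2 _ h
          exact sub_left_injective h
      rw [Finset.card_erase_of_mem hxZ] at hcard
      have hpos : 0 < (Z.filter (fun z => r ≤ t z)).card := Finset.card_pos.mpr ⟨x, hxZ⟩
      omega
    have hle := skeleton t R hR A N D v0 hv0 hD1 (t x - t y)
      (Finset.Icc (t y + 1) (t x))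
      (by intro r hr; rw [Finset.mem_Icc] at hr ⊢; have := hR x; omega)
      (by rw [Nat.card_Icc]; omega) h0 h1
    refine ⟨A, le_trans (le_of_eq ?_) hle⟩
    rw [abs_of_nonneg (by push_cast; omega)]
    push_cast
    omega

end Core



end Abstract


/-- Prefix toppling count. -/
def cnt {d k : ℕ} (zs : Fin k → (Fin d → ℤ)) (j : ℕ) (z : Fin d → ℤ) : ℕ :=
  (Finset.univ.filter (fun i : Fin k => i.val < j ∧ zs i = z)).card

lemma cnt_zero {d k : ℕ} (zs : Fin k → (Fin d → ℤ)) (z : Fin d → ℤ) :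
    cnt zs 0 z = 0 := by
  simp [cnt]

lemma cnt_succ {d k : ℕ} (zs : Fin k → (Fin d → ℤ)) (j : ℕ) (hj : j < k) (z : Fin d → ℤ) :
    cnt zs (j + 1) z = cnt zs j z + (if zs ⟨j, hj⟩ = z then 1 else 0) := by
  classical
  unfold cnt
  rw [Finset.card_filter, Finset.card_filter]
  have : ∀ i : Fin k, (if i.val < j + 1 ∧ zs i = z then (1:ℕ) else 0)
      = (if i.val < j ∧ zs i = z then (1:ℕ) else 0)
        + (if i = ⟨j, hj⟩ ∧ zs i = z then (1:ℕ) else 0) := by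
    intro i
    by_cases h1 : zs i = z
    · by_cases h2 : i = ⟨j, hj⟩
      · subst h2; simp [h1]
      · have : i.val ≠ j := fun h => h2 (Fin.ext h)
        by_cases h3 : i.val < j <;> simp [h1, h2, h3] <;> omega
    · simp [h1]
  rw [Finset.sum_congr rfl (fun i _ => this i), Finset.sum_add_distrib]
  congr 1
  have : ∀ i : Fin k, (if i = ⟨j, hj⟩ ∧ zs i = z then (1:ℕ) else 0)
      = (if i = ⟨j, hj⟩ then (if zs ⟨j, hj⟩ = z then 1 else 0) else 0) := by
    intro i
    by_cases h2 : i = ⟨j, hj⟩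
    · subst h2; simp
    · simp [h2]
  rw [Finset.sum_congr rfl (fun i _ => this i), Finset.sum_ite_eq' Finset.univ]
  simp

lemma odometer {d : ℕ} (M : Sandpile d) (c : (Fin d → ℤ) → ℕ)
    (k : ℕ) (cs : Fin (k + 1) → (Fin d → ℤ) → ℕ) (zs : Fin k → (Fin d → ℤ))
    (hc0 : cs 0 = c)
    (hstep : ∀ i : Fin k, M.SeqStepAt (zs i) (cs i.castSucc) (cs i.succ)) :
    ∀ (j : ℕ) (hj : j ≤ k) (z : Fin d → ℤ),
      (cs ⟨j, Nat.lt_succ_of_le hj⟩ z : ℤ)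
        = (c z : ℤ) + ∑ v ∈ M.N, (M.D v : ℤ) * (cnt zs j (z - v) : ℤ)
          - (M.θ : ℤ) * (cnt zs j z : ℤ) := by
  intro j
  induction j with
  | zero =>
    intro hj z
    have h0 : (⟨0, Nat.lt_succ_of_le hj⟩ : Fin (k+1)) = 0 := rfl
    simp [h0, hc0, cnt_zero]
  | succ j ih =>
    intro hj z
    have hjk : j < k := hj
    have hle : j ≤ k := Nat.le_of_lt hjk
    set i : Fin k := ⟨j, hjk⟩ with hi
    have hcast : i.castSucc = (⟨j, Nat.lt_succ_of_le hle⟩ : Fin (k+1)) := rfl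
    have hsucc : i.succ = (⟨j + 1, Nat.lt_succ_of_le hj⟩ : Fin (k+1)) := rfl
    obtain ⟨h1, h2⟩ := hstep i
    rw [hcast] at h1 h2
    rw [← hsucc, h2 z]
    have ihz := ih hle
    -- counts
    have hcz : (cnt zs (j+1) z : ℤ) = cnt zs j z + (if zs i = z then 1 else 0) := by
      rw [cnt_succ zs j hjk z]; push_cast; split <;> simp
    have hczv : ∀ v, (cnt zs (j+1) (z - v) : ℤ)
        = cnt zs j (z - v) + (if zs i = z - v then 1 else 0) := by
      intro v
      rw [cnt_succ zs j hjk (z - v)]; push_cast; split <;> simp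
    have hsum : ∑ v ∈ M.N, (M.D v : ℤ) * (cnt zs (j+1) (z - v) : ℤ)
        = ∑ v ∈ M.N, (M.D v : ℤ) * (cnt zs j (z - v) : ℤ)
          + (if z - zs i ∈ M.N then (M.D (z - zs i) : ℤ) else 0) := by
      rw [Finset.sum_congr rfl (fun v _ => by rw [hczv v])]
      have expand : ∀ v ∈ M.N, (M.D v : ℤ) * ((cnt zs j (z - v) : ℤ)
            + (if zs i = z - v then 1 else 0))
          = (M.D v : ℤ) * (cnt zs j (z - v) : ℤ)
            + (if v = z - zs i then (M.D v : ℤ) else 0) := by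
        intro v _
        rw [mul_add]
        congr 1
        have : (zs i = z - v) ↔ (v = z - zs i) := by
          constructor
          · intro h; rw [h]; abel
          · intro h; rw [h]; abel
        rw [if_congr this rfl rfl]
        split <;> simp
      rw [Finset.sum_congr rfl expand, Finset.sum_add_distrib]
      congr 1
      rw [Finset.sum_ite_eq' M.N (z - zs i) (fun v => (M.D v : ℤ))]
    by_cases hz : z = zs i
    · rw [if_pos hz]
      have hznn : M.θ ≤ cs ⟨j, Nat.lt_succ_of_le hle⟩ z := by rw [hz]; exact h1
      push_cast [Nat.cast_sub hznn]
      rw [ihz z, hsum, hcz]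
      simp only [hz, sub_self, M.zero_not_mem, if_false, if_true, eq_self_iff_true]
      ring
    · rw [if_neg hz]
      have hz' : zs i ≠ z := fun h => hz h.symm
      push_cast
      rw [ihz z, hsum, hcz]
      simp only [if_neg hz']
      split <;> ring


end SandAux

end AuxProof

/-- along any sequential derivation from a finite configuration
`c`, the toppling counts of two neighboring cells `x` and `y ∈ x + N` differ
by at most the total number of grains of `c`. -/
theorem sandpile_neighbor_toppling_counts_close {d : ℕ} (hd : 1 ≤ d)
    (M : Sandpile d) (c : (Fin d → ℤ) → ℕ) (hfin : (Function.support c).Finite)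
    (k : ℕ) (cs : Fin (k + 1) → (Fin d → ℤ) → ℕ) (zs : Fin k → (Fin d → ℤ))
    (hc0 : cs 0 = c)
    (hstep : ∀ i : Fin k, M.SeqStepAt (zs i) (cs i.castSucc) (cs i.succ))
    (x y : Fin d → ℤ) (hxy : y - x ∈ M.N) :
    |((Finset.univ.filter (fun i : Fin k => zs i = x)).card : ℤ)
        - ((Finset.univ.filter (fun i : Fin k => zs i = y)).card : ℤ)|
      ≤ (∑ z ∈ hfin.toFinset, c z : ℕ) := by
  classical
  let t : (Fin d → ℤ) → ℕ := fun z => (Finset.univ.filter (fun i : Fin k => zs i = z)).card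
  show |(t x : ℤ) - (t y : ℤ)| ≤ ((∑ z ∈ hfin.toFinset, c z : ℕ) : ℤ)
  have hcntk : ∀ z, SandAux.cnt zs k z = t z := by
    intro z
    unfold SandAux.cnt
    congr 1
    apply Finset.filter_congr
    intro i _
    simp [i.isLt]
  have hodo := SandAux.odometer M c k cs zs hc0 hstep k le_rfl
  have hid : ∀ z, (M.θ : ℤ) * (t z : ℤ) - ∑ v ∈ M.N, (M.D v : ℤ) * (t (z - v) : ℤ)
      = (c z : ℤ) - (cs ⟨k, Nat.lt_succ_of_le le_rfl⟩ z : ℤ) := by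
    intro z
    have h := hodo z
    rw [hcntk z, Finset.sum_congr rfl (fun v _ => by rw [hcntk (z - v)])] at h
    linarith
  set Z : Finset (Fin d → ℤ) := Finset.univ.image zs with hZdef
  have hZ : ∀ z, t z ≠ 0 → z ∈ Z := by
    intro z h
    obtain ⟨i, hi⟩ := Finset.card_ne_zero.mp h
    rw [Finset.mem_filter] at hi
    exact Finset.mem_image.mpr ⟨i, Finset.mem_univ i, hi.2⟩
  have hR : ∀ z, t z ≤ k := by
    intro z
    have := Finset.card_filter_le (Finset.univ : Finset (Fin k)) (fun i => zs i = z)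
    simpa using this
  obtain ⟨A, hA⟩ := SandAux.Core.core t Z hZ k hR M.N M.D (y - x) hxy (M.D_pos _ hxy) x
  have hxv0 : x + (y - x) = y := by abel
  rw [hxv0] at hA
  have hθ : ((M.θ : ℕ) : ℤ) = ∑ v ∈ M.N, (M.D v : ℤ) := by
    unfold Sandpile.θ
    push_cast
    rfl
  calc |(t x : ℤ) - (t y : ℤ)|
      ≤ ∑ z ∈ A, ((∑ v ∈ M.N, (M.D v : ℤ)) * (t z : ℤ)
          - ∑ v ∈ M.N, (M.D v : ℤ) * (t (z - v) : ℤ)) := hA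
    _ = ∑ z ∈ A, ((c z : ℤ) - (cs ⟨k, Nat.lt_succ_of_le le_rfl⟩ z : ℤ)) := by
        apply Finset.sum_congr rfl
        intro z _
        rw [← hθ]
        exact hid z
    _ ≤ ∑ z ∈ A, (c z : ℤ) := by
        apply Finset.sum_le_sum
        intro z _
        have : (0 : ℤ) ≤ (cs ⟨k, Nat.lt_succ_of_le le_rfl⟩ z : ℤ) := by positivity
        linarith
    _ = ∑ z ∈ A ∩ hfin.toFinset, (c z : ℤ) := by
        symm
        apply Finset.sum_subset Finset.inter_subset_left
        intro z hzA hz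
        have : c z = 0 := by
          by_contra hc
          exact hz (Finset.mem_inter.mpr ⟨hzA, (Set.Finite.mem_toFinset hfin).mpr hc⟩)
        simp [this]
    _ ≤ ∑ z ∈ hfin.toFinset, (c z : ℤ) := by
        apply Finset.sum_le_sum_of_subset_of_nonneg Finset.inter_subset_right
        intro z _ _
        positivity
    _ = ((∑ z ∈ hfin.toFinset, c z : ℕ) : ℤ) := by
        push_cast
        rfl
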